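/- Let U be a two-dimensional update family and let u ∈ S¹ be a rational direction with α⁻(u) < ∞. Then there exists a finite set Z ⊆ ℓ_u⁺ such that ℓ_u⁻ ⊆ [H_u ∪ Z]. -/

import Mathlib

open MeasureTheory Filter Set

namespace BP

/-- A site of the two-dimensional lattice `ℤ²`. -/
abbrev Site := ℤ × ℤ

/-- One step of the `U`-bootstrap process: a site becomes infected if some update rule,
translated by it, is already entirely infected. -/
def step (U : Finset (Finset Site)) (A : Set Site) : Set Site :=
  A ∪ {x : Site | ∃ X ∈ U, ∀ y ∈ X, x + y ∈ A}

/-- The sets `A_t` of the `U`-bootstrap process. -/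
def iter (U : Finset (Finset Site)) (A : Set Site) : ℕ → Set Site
  | 0 => A
  | t + 1 => step U (iter U A t)

/-- The closure `[A]` of `A` under the `U`-bootstrap process. -/
def bclosure (U : Finset (Finset Site)) (A : Set Site) : Set Site :=
  ⋃ t : ℕ, iter U A t

/-- The inner product of a site with a real vector. -/
noncomputable def ip (x : Site) (u : ℝ × ℝ) : ℝ := (x.1 : ℝ) * u.1 + (x.2 : ℝ) * u.2

/-- The inner product of two real vectors. -/
noncomputable def ipR (v w : ℝ × ℝ) : ℝ := v.1 * w.1 + v.2 * w.2

/-- `u` is a unit vector, i.e. an element of `S¹`. -/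
def unitVec (u : ℝ × ℝ) : Prop := u.1 ^ 2 + u.2 ^ 2 = 1

/-- The discrete half-plane `H_u = {x : ⟨x,u⟩ < 0}`. -/
def halfPlane (u : ℝ × ℝ) : Set Site := {x : Site | ip x u < 0}

/-- `u` is a stable direction for `U`: the half-plane `H_u` is closed under the process. -/
def IsStable (U : Finset (Finset Site)) (u : ℝ × ℝ) : Prop :=
  bclosure U (halfPlane u) = halfPlane u

/-- The stable set `S = S(U)`, as a set of unit vectors. -/
def stableSet (U : Finset (Finset Site)) : Set (ℝ × ℝ) :=
  {u | unitVec u ∧ IsStable U u}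

/-- The discrete line `ℓ_u` through the origin perpendicular to `u`. -/
def line (u : ℝ × ℝ) : Set Site := {x | ip x u = 0}

/-- The perpendicular vector pointing to the right as one looks in the direction `u`. -/
def rightPerp (u : ℝ × ℝ) : ℝ × ℝ := (u.2, -u.1)

/-- `ℓ_u⁺`: the origin together with the sites of `ℓ_u` to the right of the origin
(as one looks in the direction `u`). -/
def linePlus (u : ℝ × ℝ) : Set Site := {x | ip x u = 0 ∧ 0 ≤ ip x (rightPerp u)}

/-- `ℓ_u⁻`: the origin together with the sites of `ℓ_u` to the left of the origin. -/
def lineMinus (u : ℝ × ℝ) : Set Site := {x | ip x u = 0 ∧ ip x (rightPerp u) ≤ 0}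

/-- `α⁺(u)`: the minimum cardinality of a finite set `Z ⊆ ℤ²` such that `[H_u ∪ Z]`
contains infinitely many sites of `ℓ_u⁺` (and `⊤ = ∞` if there is no such set). -/
noncomputable def alphaPlus (U : Finset (Finset Site)) (u : ℝ × ℝ) : ℕ∞ :=
  sInf {n : ℕ∞ | ∃ Z : Finset Site, (Z.card : ℕ∞) = n ∧
    (bclosure U (halfPlane u ∪ ↑Z) ∩ linePlus u).Infinite}

/-- `α⁻(u)`: as `α⁺(u)`, but for `ℓ_u⁻`. -/
noncomputable def alphaMinus (U : Finset (Finset Site)) (u : ℝ × ℝ) : ℕ∞ :=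
  sInf {n : ℕ∞ | ∃ Z : Finset Site, (Z.card : ℕ∞) = n ∧
    (bclosure U (halfPlane u ∪ ↑Z) ∩ lineMinus u).Infinite}

/-- The difficulty `α(u)` of a direction `u`: `min {α⁺(u), α⁻(u)}` if both are finite,
and `∞` otherwise. -/
noncomputable def difficulty (U : Finset (Finset Site)) (u : ℝ × ℝ) : ℕ∞ :=
  if alphaPlus U u ≠ ⊤ ∧ alphaMinus U u ≠ ⊤ then min (alphaPlus U u) (alphaMinus U u)
  else ⊤

/-- `ᾱ(u) = min {α⁺(u), α⁻(u)}`. -/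
noncomputable def alphaBar (U : Finset (Finset Site)) (u : ℝ × ℝ) : ℕ∞ :=
  min (alphaPlus U u) (alphaMinus U u)

/-- The difficulty `α = α(U)` of the update family `U`: the minimum over open
semicircles `C` of the maximum of `α(u)` over `u ∈ C`.  (An open semicircle is
parametrised by its midpoint `w`.) -/
noncomputable def famDifficulty (U : Finset (Finset Site)) : ℕ∞ :=
  ⨅ (w : ℝ × ℝ) (_ : unitVec w),
    ⨆ (u : ℝ × ℝ) (_ : unitVec u) (_ : 0 < ipR u w), difficulty U u

/-- `U` is critical: some (closed) semicircle has finite intersection with the stable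
set, and every open semicircle meets the stable set. -/
def Critical (U : Finset (Finset Site)) : Prop :=
  (∃ w : ℝ × ℝ, unitVec w ∧ (stableSet U ∩ {u | 0 ≤ ipR u w}).Finite) ∧
  (∀ w : ℝ × ℝ, unitVec w → (stableSet U ∩ {u | 0 < ipR u w}).Nonempty)

/-- The balancedness condition: some closed semicircle `C` has `α(u) ≤ α(U)`
for every `u ∈ C`.  A critical family is balanced iff this holds, unbalanced otherwise. -/
def BalancedCond (U : Finset (Finset Site)) : Prop :=
  ∃ w : ℝ × ℝ, unitVec w ∧
    ∀ u : ℝ × ℝ, unitVec u → 0 ≤ ipR u w → difficulty U u ≤ famDifficulty U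

/-- The time `τ` at which the origin is infected (`⊤ = ∞` if it never is). -/
noncomputable def tau (U : Finset (Finset Site)) (A : Set Site) : ℕ∞ :=
  ⨅ (t : ℕ) (_ : (0 : Site) ∈ iter U A t), (t : ℕ∞)

/-- Configurations of initially infected sites in the plane. -/
abbrev Config := Site → Bool

/-- The set of initially infected sites of a configuration. -/
def initSet (ω : Config) : Set Site := {x | ω x = true}

/-- `μ` is the product Bernoulli(`p`) measure (law of a "`p`-random set"): a probability
measure giving every cylinder event its product probability. -/
def IsBernoulliProduct {ι : Type*} (p : ℝ) (μ : Measure (ι → Bool)) : Prop :=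
  IsProbabilityMeasure μ ∧
    ∀ S : Finset ι, ∀ f : ι → Bool,
      μ {ω | ∀ x ∈ S, ω x = f x} =
        ∏ x ∈ S, if f x then ENNReal.ofReal p else ENNReal.ofReal (1 - p)

/-- Reduction of a site modulo `n`, giving a point of the torus `ℤ_n²`. -/
def projT (n : ℕ) (y : Site) : ZMod n × ZMod n := ((y.1 : ZMod n), (y.2 : ZMod n))

/-- One step of the `U`-bootstrap process on the torus `ℤ_n²`. -/
def stepT (n : ℕ) (U : Finset (Finset Site)) (A : Set (ZMod n × ZMod n)) :
    Set (ZMod n × ZMod n) :=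
  A ∪ {x | ∃ X ∈ U, ∀ y ∈ X, x + projT n y ∈ A}

/-- The sets `A_t` of the `U`-bootstrap process on the torus. -/
def iterT (n : ℕ) (U : Finset (Finset Site)) (A : Set (ZMod n × ZMod n)) :
    ℕ → Set (ZMod n × ZMod n)
  | 0 => A
  | t + 1 => stepT n U (iterT n U A t)

/-- The closure of `A` under the `U`-bootstrap process on the torus. -/
def bclosureT (n : ℕ) (U : Finset (Finset Site)) (A : Set (ZMod n × ZMod n)) :
    Set (ZMod n × ZMod n) :=
  ⋃ t : ℕ, iterT n U A t

/-- `A` percolates on the torus `ℤ_n²`. -/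
def PercolatesT (n : ℕ) (U : Finset (Finset Site)) (A : Set (ZMod n × ZMod n)) : Prop :=
  bclosureT n U A = Set.univ

/-- The critical probability `p_c(ℤ_n², U)`, where `P` is the family of product
Bernoulli measures on subsets of the torus. -/
noncomputable def pcT (n : ℕ) (U : Finset (Finset Site))
    (P : ℝ → Measure ((ZMod n × ZMod n) → Bool)) : ℝ :=
  sInf {p : ℝ | p ∈ Set.Icc (0 : ℝ) 1 ∧
    1 / 2 ≤ P p {ω | PercolatesT n U {x | ω x = true}}}

/-- The Euclidean (`ℓ₂`) distance between two sites. -/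
noncomputable def dist2 (x y : Site) : ℝ :=
  Real.sqrt ((((x.1 - y.1 : ℤ) : ℝ)) ^ 2 + (((x.2 - y.2 : ℤ) : ℝ)) ^ 2)

/-- A set of sites is (strongly) connected in the graph `G_κ` joining sites at
Euclidean distance at most `κ`. -/
def Conn (κ : ℝ) (S : Set Site) : Prop :=
  ∀ x ∈ S, ∀ y ∈ S,
    Relation.ReflTransGen (fun a b : Site => b ∈ S ∧ dist2 a b ≤ κ) x y

/-- The range `ν` of the update family:
`ν = max {‖x − y‖₂ : x, y ∈ X ∪ {0}, X ∈ U}`. -/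
noncomputable def nu (U : Finset (Finset Site)) : ℝ :=
  sSup {d : ℝ | ∃ X ∈ U, ∃ x ∈ insert (0 : Site) X, ∃ y ∈ insert (0 : Site) X,
    d = dist2 x y}

/-- The diameter of a set of sites. -/
noncomputable def diam2 (K : Set Site) : ℝ :=
  sSup {d : ℝ | ∃ x ∈ K, ∃ y ∈ K, d = dist2 x y}

/-- The projection `π(K, u) = max {|⟨x − y, u⟩| : x, y ∈ K}`. -/
noncomputable def proj (K : Set Site) (u : ℝ × ℝ) : ℝ :=
  sSup {d : ℝ | ∃ x ∈ K, ∃ y ∈ K, d = |ip x u - ip y u|}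

/-- A `T`-droplet: a nonempty intersection of translated half-planes `H_u + a_u`,
`u ∈ T`. -/
def IsDroplet (T : Set (ℝ × ℝ)) (D : Set Site) : Prop :=
  D.Nonempty ∧ ∃ a : (ℝ × ℝ) → Site, D = ⋂ u ∈ T, {x : Site | ip (x - a u) u < 0}

/-- `D` is the smallest `T`-droplet containing `K`. -/
def IsMinDroplet (T : Set (ℝ × ℝ)) (K D : Set Site) : Prop :=
  IsDroplet T D ∧ K ⊆ D ∧ ∀ D' : Set Site, IsDroplet T D' → K ⊆ D' → D ⊆ D'

/-- An `a`-cluster: a strongly connected set of `a` sites. -/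
def IsCluster (κ : ℝ) (a : ℕ) (B : Finset Site) : Prop :=
  B.card = a ∧ Conn κ ↑B

/-- One step of the `α`-covering algorithm: two droplets of the current collection lying
within strong-connectivity reach of a common translate of `D̂` are replaced by the
smallest `S_B`-droplet containing their union. -/
inductive CoverStep (SB : Set (ℝ × ℝ)) (κ : ℝ) (Dhat : Set Site) :
    Multiset (Set Site) → Multiset (Set Site) → Prop
  | merge (rest : Multiset (Set Site)) (D₁ D₂ D' : Set Site) (x : Site) :
      Conn κ (D₁ ∪ D₂ ∪ ((fun z => z + x) '' Dhat)) →
      IsMinDroplet SB (D₁ ∪ D₂) D' →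
      CoverStep SB κ Dhat (D₁ ::ₘ D₂ ::ₘ rest) (D' ::ₘ rest)

/-- `𝒟` is an `α`-cover of `K`: a possible output of the `α`-covering algorithm, started
from a maximal collection of pairwise disjoint `a`-clusters of `K`, each contained in a
translate of `D̂`. -/
def IsAlphaCover (κ : ℝ) (a : ℕ) (SB : Set (ℝ × ℝ)) (Dhat : Set Site)
    (K : Set Site) (𝒟 : Multiset (Set Site)) : Prop :=
  ∃ B : List (Finset Site), ∃ c : List Site,
    B.length = c.length ∧
    (∀ Bi ∈ B, IsCluster κ a Bi ∧ ↑Bi ⊆ K) ∧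
    B.Pairwise (fun B₁ B₂ => Disjoint B₁ B₂) ∧
    (∀ B' : Finset Site, IsCluster κ a B' → ↑B' ⊆ K → ∃ Bi ∈ B, ¬ Disjoint B' Bi) ∧
    (∀ i : ℕ, ∀ h₁ : i < B.length, ∀ h₂ : i < c.length,
      ↑(B.get ⟨i, h₁⟩) ⊆ (fun z => z + c.get ⟨i, h₂⟩) '' Dhat) ∧
    Relation.ReflTransGen (CoverStep SB κ Dhat)
      ↑(c.map fun v => (fun z => z + v) '' Dhat) 𝒟

/-- The droplet `D` is `α`-covered (with respect to the initial set `A`). -/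
def AlphaCovered (κ : ℝ) (a : ℕ) (SB : Set (ℝ × ℝ)) (Dhat : Set Site)
    (A D : Set Site) : Prop :=
  IsAlphaCover κ a SB Dhat (D ∩ A) {D}

/-- The constant `ρ` used for balanced families:
`ρ = max {‖y − Z‖₂ : u ∈ S_B, |Z| = α − 1, y ∈ [H_u ∪ Z] ∖ H_u}`. -/
noncomputable def rho (U : Finset (Finset Site)) (SB : Set (ℝ × ℝ)) (a : ℕ) : ℝ :=
  sSup {d : ℝ | ∃ u ∈ SB, ∃ Z : Finset Site, Z.card = a - 1 ∧
    ∃ y ∈ bclosure U (halfPlane u ∪ ↑Z) \ halfPlane u,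
      d = sInf {r : ℝ | ∃ z ∈ Z, r = dist2 y z}}

/-- The connectivity constant `κ = 2(ρ + ν)` for balanced families. -/
noncomputable def kappaB (U : Finset (Finset Site)) (SB : Set (ℝ × ℝ)) (a : ℕ) : ℝ :=
  2 * (rho U SB a + nu U)

/-- A valid choice of the finite set `S_B` of stable directions for a balanced family:
`ᾱ(u) ≥ α` for all `u ∈ S_B`, and `S_B` meets every open semicircle. -/
def ValidSB (U : Finset (Finset Site)) (a : ℕ) (SB : Set (ℝ × ℝ)) : Prop :=
  SB.Finite ∧ SB ⊆ stableSet U ∧ (∀ u ∈ SB, (a : ℕ∞) ≤ alphaBar U u) ∧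
  ∀ w : ℝ × ℝ, unitVec w → ∃ u ∈ SB, 0 < ipR u w

/-- `D` is internally spanned by `A`: some strongly connected subset `L` of `[D ∩ A]`
has `D` as the smallest `T`-droplet containing it. -/
def InternallySpanned (U : Finset (Finset Site)) (T : Set (ℝ × ℝ)) (κ : ℝ)
    (A D : Set Site) : Prop :=
  ∃ L : Set Site, L ⊆ bclosure U (D ∩ A) ∧ Conn κ L ∧ IsMinDroplet T L D

/-- A valid choice of the set `S_U = {u*, −u*, u^l, u^r}` of stable directions for an
unbalanced family: `min {α(u*), α(−u*)} ≥ α + 1`, `u^l` (resp. `u^r`) lies in the open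
semicircle to the left (resp. right) of `u*`, and `min {ᾱ(u^l), ᾱ(u^r)} = α`. -/
def ValidSU (U : Finset (Finset Site)) (a : ℕ) (ustar ul ur : ℝ × ℝ) : Prop :=
  ustar ∈ stableSet U ∧ -ustar ∈ stableSet U ∧ ul ∈ stableSet U ∧ ur ∈ stableSet U ∧
  (a : ℕ∞) + 1 ≤ difficulty U ustar ∧ (a : ℕ∞) + 1 ≤ difficulty U (-ustar) ∧
  0 < ipR ul (-ustar.2, ustar.1) ∧ 0 < ipR ur (ustar.2, -ustar.1) ∧
  min (alphaBar U ul) (alphaBar U ur) = (a : ℕ∞)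

/-- The point of `S¹` at angle `θ`. -/
noncomputable def circlePt (θ : ℝ) : ℝ × ℝ := (Real.cos θ, Real.sin θ)

/-- `u` is a rational direction: it is parallel to a nonzero integer vector,
i.e. it has rational or infinite slope. -/
def RationalDir (u : ℝ × ℝ) : Prop :=
  ∃ x : Site, x ≠ 0 ∧ (x.1 : ℝ) * u.2 = (x.2 : ℝ) * u.1

/-- The closed arc of directions from `u` to `v` (anticlockwise). -/
def arcFrom (u v : ℝ × ℝ) : Set (ℝ × ℝ) :=
  {w | ∃ θ₁ θ₂ θ : ℝ, circlePt θ₁ = u ∧ circlePt θ₂ = v ∧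
    θ₁ ≤ θ₂ ∧ θ₂ < θ₁ + 2 * Real.pi ∧ θ ∈ Set.Icc θ₁ θ₂ ∧ circlePt θ = w}

/-- `u` and `v` are consecutive elements of `T`:
`u ≠ v` and `T ∩ [u, v] = {u, v}`. -/
def ConsecutiveIn (T : Set (ℝ × ℝ)) (u v : ℝ × ℝ) : Prop :=
  u ≠ v ∧ T ∩ arcFrom u v = {u, v}

namespace LRAux

/-- integer "height" of a site relative to integer vector `v`. -/
def Nv (v z : Site) : ℤ := z.1 * v.1 + z.2 * v.2

/-- integer "position" of a site relative to integer vector `v`. -/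
def Pv (v z : Site) : ℤ := z.1 * v.2 - z.2 * v.1

lemma Nv_add (v z w : Site) : Nv v (z + w) = Nv v z + Nv v w := by
  simp only [Nv, Prod.fst_add, Prod.snd_add]; ring

lemma Pv_add (v z w : Site) : Pv v (z + w) = Pv v z + Pv v w := by
  simp only [Pv, Prod.fst_add, Prod.snd_add]; ring

lemma Nv_sub (v z w : Site) : Nv v (z - w) = Nv v z - Nv v w := by
  simp only [Nv, Prod.fst_sub, Prod.snd_sub]; ring

lemma Pv_sub (v z w : Site) : Pv v (z - w) = Pv v z - Pv v w := by
  simp only [Pv, Prod.fst_sub, Prod.snd_sub]; ring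

lemma mem_step {U : Finset (Finset Site)} {A : Set Site} {x : Site} :
    x ∈ step U A ↔ x ∈ A ∨ ∃ X ∈ U, ∀ y ∈ X, x + y ∈ A := Iff.rfl

lemma iter_succ (U : Finset (Finset Site)) (A : Set Site) (t : ℕ) :
    iter U A (t + 1) = step U (iter U A t) := rfl

lemma mem_bclosure_iff {U : Finset (Finset Site)} {A : Set Site} {x : Site} :
    x ∈ bclosure U A ↔ ∃ t, x ∈ iter U A t := Set.mem_iUnion

lemma subset_bclosure (U : Finset (Finset Site)) (A : Set Site) : A ⊆ bclosure U A :=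
  fun x hx => mem_bclosure_iff.2 ⟨0, hx⟩

lemma iter_subset_bclosure (U : Finset (Finset Site)) (A : Set Site) (t : ℕ) :
    iter U A t ⊆ bclosure U A :=
  fun x hx => mem_bclosure_iff.2 ⟨t, hx⟩

lemma iter_le_iter {U : Finset (Finset Site)} {A : Set Site} :
    ∀ {s t : ℕ}, s ≤ t → iter U A s ⊆ iter U A t := by
  intro s t h
  induction t with
  | zero => simp_all
  | succ t ih =>
    rcases Nat.lt_or_ge s (t+1) with h' | h'
    · exact fun x hx => Or.inl (ih (Nat.lt_succ_iff.1 h') hx)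
    · have : s = t + 1 := le_antisymm h h'
      subst this; exact fun x hx => hx

lemma iter_mono_left {U : Finset (Finset Site)} {A B : Set Site} (h : A ⊆ B) :
    ∀ t, iter U A t ⊆ iter U B t := by
  intro t
  induction t with
  | zero => exact h
  | succ t ih =>
    intro x hx
    rcases hx with hx | ⟨X, hXU, hXy⟩
    · exact Or.inl (ih hx)
    · exact Or.inr ⟨X, hXU, fun y hy => ih (hXy y hy)⟩

lemma bclosure_mono {U : Finset (Finset Site)} {A B : Set Site} (h : A ⊆ B) :
    bclosure U A ⊆ bclosure U B := by
  intro x hx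
  obtain ⟨t, ht⟩ := mem_bclosure_iff.1 hx
  exact mem_bclosure_iff.2 ⟨t, iter_mono_left h t ht⟩

lemma bclosure_subset_of_subset {U : Finset (Finset Site)} {A B : Set Site}
    (h : B ⊆ bclosure U A) : bclosure U B ⊆ bclosure U A := by
  classical
  have key : ∀ t, iter U B t ⊆ bclosure U A := by
    intro t
    induction t with
    | zero => exact h
    | succ t ih =>
      intro z hz
      rcases hz with hz | ⟨X, hXU, hXy⟩
      · exact ih hz
      · have hch : ∀ y : Site, y ∈ X → ∃ t', z + y ∈ iter U A t' :=
          fun y hy => mem_bclosure_iff.1 (ih (hXy y hy))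
        choose! g hg using hch
        refine mem_bclosure_iff.2 ⟨X.sup g + 1, Or.inr ⟨X, hXU, fun y hy => ?_⟩⟩
        exact iter_le_iter (Finset.le_sup hy) (hg y hy)
  intro z hz
  obtain ⟨t, ht⟩ := mem_bclosure_iff.1 hz
  exact key t ht

lemma iter_shift_invariant {U : Finset (Finset Site)} {A : Set Site} {g : Site}
    (hA : ∀ a ∈ A, a + g ∈ A) :
    ∀ t, ∀ z ∈ iter U A t, z + g ∈ iter U A t := by
  intro t
  induction t with
  | zero => exact hA
  | succ t ih =>
    intro z hz
    rcases hz with hz | ⟨X, hXU, hXy⟩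
    · exact Or.inl (ih z hz)
    · refine Or.inr ⟨X, hXU, fun y hy => ?_⟩
      have := ih _ (hXy y hy)
      rwa [add_right_comm] at this

lemma iter_translate {U : Finset (Finset Site)} {A : Set Site} (w : Site) :
    ∀ t, ∀ z ∈ iter U A t, z + w ∈ iter U {b : Site | b - w ∈ A} t := by
  intro t
  induction t with
  | zero => intro z hz; show z + w - w ∈ A; simpa using (show z ∈ A from hz)
  | succ t ih =>
    intro z hz
    rcases hz with hz | ⟨X, hXU, hXy⟩
    · exact Or.inl (ih z hz)
    · refine Or.inr ⟨X, hXU, fun y hy => ?_⟩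
      have := ih _ (hXy y hy)
      rwa [add_right_comm] at this

lemma bclosure_translate {U : Finset (Finset Site)} {A : Set Site} (w z : Site)
    (hz : z ∈ bclosure U A) : z + w ∈ bclosure U {b : Site | b - w ∈ A} := by
  obtain ⟨t, ht⟩ := mem_bclosure_iff.1 hz
  exact mem_bclosure_iff.2 ⟨t, iter_translate w t z ht⟩

lemma one_le_sq {a : ℤ} (h : a ≠ 0) : 1 ≤ a * a := by
  nlinarith [Int.one_le_abs h, abs_mul_abs_self a]

/-- From a unit rational direction, get a parallel nonzero integer vector. -/
lemma exists_parallel (u : ℝ × ℝ) (hu : unitVec u) (hur : RationalDir u) :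
    ∃ v : Site, v ≠ 0 ∧ ∃ s : ℝ, 0 < s ∧ (v.1 : ℝ) = s * u.1 ∧ (v.2 : ℝ) = s * u.2 := by
  obtain ⟨x₀, hx0, hpar⟩ := hur
  have hab : (0:ℝ) < (x₀.1:ℝ)^2 + (x₀.2:ℝ)^2 := by
    have h1 : x₀.1 ≠ 0 ∨ x₀.2 ≠ 0 := by
      by_contra h; push_neg at h; exact hx0 (Prod.ext h.1 h.2)
    rcases h1 with h1 | h1
    · have : (1:ℤ) ≤ x₀.1 * x₀.1 := one_le_sq h1
      have : (1:ℝ) ≤ (x₀.1:ℝ) * (x₀.1:ℝ) := by exact_mod_cast this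
      nlinarith [sq_nonneg (x₀.2:ℝ)]
    · have : (1:ℤ) ≤ x₀.2 * x₀.2 := one_le_sq h1
      have : (1:ℝ) ≤ (x₀.2:ℝ) * (x₀.2:ℝ) := by exact_mod_cast this
      nlinarith [sq_nonneg (x₀.1:ℝ)]
  set c : ℝ := (x₀.1:ℝ) * u.1 + (x₀.2:ℝ) * u.2 with hc
  have hu' : u.1^2 + u.2^2 = 1 := hu
  have hc2 : c^2 = (x₀.1:ℝ)^2 + (x₀.2:ℝ)^2 := by
    rw [hc]; nlinarith [hpar, hu', sq_nonneg ((x₀.1:ℝ) * u.2 - (x₀.2:ℝ) * u.1)]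
  have hcne : c ≠ 0 := by
    intro h; rw [h] at hc2; simp at hc2; nlinarith
  have key1 : c * u.1 = (x₀.1:ℝ) := by
    rw [hc]; linear_combination (x₀.1:ℝ) * hu' - u.2 * hpar
  have key2 : c * u.2 = (x₀.2:ℝ) := by
    rw [hc]; linear_combination (x₀.2:ℝ) * hu' + u.1 * hpar
  rcases lt_or_gt_of_ne hcne with hneg | hpos
  · refine ⟨-x₀, by simpa using hx0, -c, by linarith, ?_, ?_⟩
    · simp only [Prod.fst_neg, Int.cast_neg]; linarith [key1]
    · simp only [Prod.snd_neg, Int.cast_neg]; linarith [key2]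
  · exact ⟨x₀, hx0, c, hpos, by linarith [key1], by linarith [key2]⟩

/-- Primitive generator of the perpendicular lattice line. -/
lemma exists_generator (v : Site) (hv : v ≠ 0) :
    ∃ f : Site, Nv v f = 0 ∧ 1 ≤ Pv v f ∧
      ∀ z : Site, Nv v z = 0 → ∃ k : ℤ, z = (k * f.1, k * f.2) := by
  classical
  set d : ℕ := Int.gcd v.1 v.2 with hd
  have hd0 : d ≠ 0 := by
    intro h
    rw [hd] at h
    obtain ⟨h1, h2⟩ := Int.gcd_eq_zero_iff.1 h
    exact hv (Prod.ext h1 h2)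
  have hdne : (d:ℤ) ≠ 0 := Int.natCast_ne_zero.2 hd0
  obtain ⟨a', ha'⟩ : ((d:ℤ)) ∣ v.1 := Int.gcd_dvd_left _ _
  obtain ⟨b', hb'⟩ : ((d:ℤ)) ∣ v.2 := Int.gcd_dvd_right _ _
  have hab : a' ≠ 0 ∨ b' ≠ 0 := by
    by_contra h; push_neg at h
    exact hv (Prod.ext (by simp [ha', h.1]) (by simp [hb', h.2]))
  have hco : Int.gcd a' b' = 1 := by
    have h1 : Int.gcd ((d:ℤ) * a') ((d:ℤ) * b') = ((d:ℤ)).natAbs * Int.gcd a' b' :=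
      Int.gcd_mul_left _ _ _
    rw [← ha', ← hb', ← hd] at h1
    have h2 : ((d:ℤ)).natAbs = d := Int.natAbs_natCast d
    rw [h2] at h1
    have hd0 : d ≠ 0 := by exact_mod_cast hdne
    nlinarith [Nat.pos_of_ne_zero hd0, h1]
  obtain ⟨m, n, hmn⟩ := Int.isCoprime_iff_gcd_eq_one.2 hco
  refine ⟨(b', -a'), ?_, ?_, ?_⟩
  · show b' * v.1 + (-a') * v.2 = 0
    rw [ha', hb']; ring
  · show (b' : ℤ) * v.2 - (-a') * v.1 ≥ 1
    rw [ha', hb']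
    have hd1 : (1:ℤ) ≤ (d:ℤ) := by
      have : 0 < d := Nat.pos_of_ne_zero (by exact_mod_cast hdne)
      exact_mod_cast this
    have h2 : (1:ℤ) ≤ a' * a' + b' * b' := by
      rcases hab with h | h
      · nlinarith [one_le_sq h, mul_self_nonneg b']
      · nlinarith [one_le_sq h, mul_self_nonneg a']
    nlinarith
  · intro z hz
    have heq : z.1 * a' + z.2 * b' = 0 := by
      have h1 : z.1 * v.1 + z.2 * v.2 = 0 := hz
      rw [ha', hb'] at h1
      have h2 : (d:ℤ) * (z.1 * a' + z.2 * b') = 0 := by linarith [h1]; 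
      rcases mul_eq_zero.1 h2 with h | h
      · exact absurd h hdne
      · exact h
    refine ⟨z.1 * n - z.2 * m, ?_⟩
    apply Prod.ext
    · show z.1 = (z.1 * n - z.2 * m) * b'
      linear_combination m * heq - z.1 * hmn
    · show z.2 = (z.1 * n - z.2 * m) * (-a')
      linear_combination n * heq - z.2 * hmn

end LRAux


set_option maxHeartbeats 1000000

/-- **Lemma 3.3 (Lemma 32 of [BSU]).**  If `α⁻(u) < ∞`, then there is a finite set
`Z ⊆ ℓ_u⁺` such that `ℓ_u⁻ ⊆ [H_u ∪ Z]`. -/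
theorem leftright_cluster
    (U : Finset (Finset Site)) (hU : ∀ X ∈ U, (0 : Site) ∉ X)
    (u : ℝ × ℝ) (hu : unitVec u) (hur : RationalDir u)
    (hfin : alphaMinus U u ≠ ⊤) :
    ∃ Z : Finset Site, ↑Z ⊆ linePlus u ∧
      lineMinus u ⊆ bclosure U (halfPlane u ∪ ↑Z) := by
  classical
  -- extract a finite seed set with infinitely many infected sites on ℓ⁻
  have hne : ∃ Z' : Finset Site,
      (bclosure U (halfPlane u ∪ ↑Z') ∩ lineMinus u).Infinite := by
    by_contra h
    push_neg at h
    have hempty : {n : ℕ∞ | ∃ Z : Finset Site, (Z.card : ℕ∞) = n ∧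
        (bclosure U (halfPlane u ∪ ↑Z) ∩ lineMinus u).Infinite} = ∅ := by
      ext n
      simp only [Set.mem_setOf_eq, Set.mem_empty_iff_false, iff_false, not_exists]
      rintro Z ⟨-, hinf⟩
      exact hinf (h Z)
    rw [alphaMinus, hempty, sInf_empty] at hfin
    exact hfin rfl
  obtain ⟨Z', hinf⟩ := hne
  -- geometry
  obtain ⟨v, hv0, s, hs, hv1, hv2⟩ := LRAux.exists_parallel u hu hur
  obtain ⟨f, hNf, hPf, hgen⟩ := LRAux.exists_generator v hv0
  set N : Site → ℤ := LRAux.Nv v with hNdef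
  set P : Site → ℤ := LRAux.Pv v with hPdef
  have hNadd : ∀ z w : Site, N (z + w) = N z + N w := fun z w => LRAux.Nv_add v z w
  have hPadd : ∀ z w : Site, P (z + w) = P z + P w := fun z w => LRAux.Pv_add v z w
  have ipN : ∀ z : Site, (N z : ℝ) = s * ip z u := by
    intro z
    simp only [hNdef, LRAux.Nv, ip]
    push_cast
    rw [hv1, hv2]; ring
  have ipP : ∀ z : Site, (P z : ℝ) = s * ip z (rightPerp u) := by
    intro z
    simp only [hPdef, LRAux.Pv, ip, rightPerp]
    push_cast
    rw [hv1, hv2]; ring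
  have memH : ∀ z : Site, z ∈ halfPlane u ↔ N z < 0 := by
    intro z
    simp only [halfPlane, Set.mem_setOf_eq]
    constructor
    · intro h
      have h1 : (N z : ℝ) < 0 := by rw [ipN z]; exact mul_neg_of_pos_of_neg hs h
      exact_mod_cast h1
    · intro h
      have h1 : (N z : ℝ) < 0 := by exact_mod_cast h
      rw [ipN z] at h1
      by_contra h'
      push_neg at h'
      exact absurd h1 (not_lt.2 (mul_nonneg hs.le h'))
  have memLm : ∀ z : Site, z ∈ lineMinus u ↔ (N z = 0 ∧ P z ≤ 0) := by
    intro z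
    simp only [lineMinus, Set.mem_setOf_eq]
    constructor
    · rintro ⟨h1, h2⟩
      constructor
      · have h3 : (N z : ℝ) = 0 := by rw [ipN z, h1, mul_zero]
        exact_mod_cast h3
      · have h3 : (P z : ℝ) ≤ 0 := by
          rw [ipP z]
          rcases lt_or_eq_of_le h2 with h | h
          · exact (mul_neg_of_pos_of_neg hs h).le
          · rw [h, mul_zero]
        exact_mod_cast h3
    · rintro ⟨h1, h2⟩
      have h3 : (N z : ℝ) = 0 := by exact_mod_cast h1
      rw [ipN z] at h3
      have h4 : (P z : ℝ) ≤ 0 := by exact_mod_cast h2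
      rw [ipP z] at h4
      constructor
      · rcases mul_eq_zero.1 h3 with h | h
        · exact absurd h (ne_of_gt hs)
        · exact h
      · by_contra h'
        push_neg at h'
        exact absurd h4 (not_le.2 (mul_pos hs h'))
  have memLp : ∀ z : Site, z ∈ linePlus u ↔ (N z = 0 ∧ 0 ≤ P z) := by
    intro z
    simp only [linePlus, Set.mem_setOf_eq]
    constructor
    · rintro ⟨h1, h2⟩
      constructor
      · have h3 : (N z : ℝ) = 0 := by rw [ipN z, h1, mul_zero]
        exact_mod_cast h3
      · have h3 : (0:ℝ) ≤ (P z : ℝ) := by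
          rw [ipP z]
          exact mul_nonneg hs.le h2
        exact_mod_cast h3
    · rintro ⟨h1, h2⟩
      have h3 : (N z : ℝ) = 0 := by exact_mod_cast h1
      rw [ipN z] at h3
      have h4 : (0:ℝ) ≤ (P z : ℝ) := by exact_mod_cast h2
      rw [ipP z] at h4
      constructor
      · rcases mul_eq_zero.1 h3 with h | h
        · exact absurd h (ne_of_gt hs)
        · exact h
      · by_contra h'
        push_neg at h'
        exact absurd h4 (not_le.2 (mul_neg_of_pos_of_neg hs h'))
  -- the generator as a map
  set F : ℤ → Site := fun k => (k * f.1, k * f.2) with hFdef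
  have hgen' : ∀ z : Site, N z = 0 → ∃ k : ℤ, z = F k := hgen
  have hNF : ∀ k : ℤ, N (F k) = 0 := by
    intro k
    have h0 : LRAux.Nv v f = 0 := hNf
    simp only [hNdef, LRAux.Nv, hFdef] at h0 ⊢
    linear_combination k * h0
  have hPF : ∀ k : ℤ, P (F k) = k * P f := by
    intro k
    simp only [hPdef, LRAux.Pv, hFdef]
    ring
  have hFadd : ∀ a b : ℤ, F (a + b) = F a + F b := by
    intro a b
    simp only [hFdef]
    apply Prod.ext <;> simp only [Prod.fst_add, Prod.snd_add] <;> ring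
  have hF1 : F 1 = f := by
    simp only [hFdef]
    apply Prod.ext <;> simp
  have hF0 : F 0 = 0 := by
    simp only [hFdef]
    apply Prod.ext <;> simp
  have hPf1 : 1 ≤ P f := hPf
  -- constants
  set h₀ : ℤ := ((Z'.sup fun z => (N z).toNat : ℕ) : ℤ) with hh₀def
  have hh₀ : ∀ z ∈ Z', N z ≤ h₀ := by
    intro z hz
    have h1 : (N z).toNat ≤ Z'.sup fun z => (N z).toNat :=
      Finset.le_sup (f := fun z => (N z).toNat) hz
    have h2 : ((N z).toNat : ℤ) ≤ h₀ := by rw [hh₀def]; exact_mod_cast h1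
    omega
  have hh₀0 : 0 ≤ h₀ := by rw [hh₀def]; exact Int.ofNat_nonneg _
  set p₀ : ℤ := -((Z'.sup fun z => (P z).natAbs : ℕ) : ℤ) with hp₀def
  have hp₀ : ∀ z ∈ Z', p₀ ≤ P z := by
    intro z hz
    have h1 : (P z).natAbs ≤ Z'.sup fun z => (P z).natAbs :=
      Finset.le_sup (f := fun z => (P z).natAbs) hz
    have h2 : (((P z).natAbs : ℕ) : ℤ) ≤ ((Z'.sup fun z => (P z).natAbs : ℕ) : ℤ) := by
      exact_mod_cast h1
    omega
  set r : ℤ := ((U.sup fun X => X.sup fun y => max (N y).natAbs (P y).natAbs : ℕ) : ℤ)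
    with hrdef
  have hr : ∀ X ∈ U, ∀ y ∈ X, ((N y).natAbs : ℤ) ≤ r ∧ ((P y).natAbs : ℤ) ≤ r := by
    intro X hX y hy
    have h1 : max (N y).natAbs (P y).natAbs ≤ X.sup fun y => max (N y).natAbs (P y).natAbs :=
      Finset.le_sup (f := fun y => max (N y).natAbs (P y).natAbs) hy
    have h2 : (X.sup fun y => max (N y).natAbs (P y).natAbs) ≤
        U.sup fun X => X.sup fun y => max (N y).natAbs (P y).natAbs :=
      Finset.le_sup (f := fun X => X.sup fun y => max (N y).natAbs (P y).natAbs) hX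
    have h3 : max (N y).natAbs (P y).natAbs ≤
        U.sup fun X => X.sup fun y => max (N y).natAbs (P y).natAbs := le_trans h1 h2
    have h4 : (N y).natAbs ≤ U.sup fun X => X.sup fun y => max (N y).natAbs (P y).natAbs :=
      le_trans (le_max_left _ _) h3
    have h5 : (P y).natAbs ≤ U.sup fun X => X.sup fun y => max (N y).natAbs (P y).natAbs :=
      le_trans (le_max_right _ _) h3
    constructor
    · rw [hrdef]; exact_mod_cast h4
    · rw [hrdef]; exact_mod_cast h5
  have hr0 : 0 ≤ r := by rw [hrdef]; exact Int.ofNat_nonneg _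
  -- the widened seed set and its closure
  set Q : Set Site := {z : Site | ∃ z' ∈ Z', ∃ k : ℕ, z = z' + F (k : ℤ)} with hQdef
  set A0 : Set Site := halfPlane u ∪ Q with hA0def
  set AS : Set Site := bclosure U A0 with hASdef
  have hZ'A : (halfPlane u ∪ (↑Z' : Set Site)) ⊆ A0 := by
    intro z hz
    rcases hz with hz | hz
    · exact Or.inl hz
    · refine Or.inr ⟨z, hz, 0, ?_⟩
      simp [hF0]
  have hsubAS : bclosure U (halfPlane u ∪ ↑Z') ⊆ AS := LRAux.bclosure_mono hZ'A
  -- shift invariance of AS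
  have hA0f : ∀ a ∈ A0, a + f ∈ A0 := by
    intro a ha
    rcases ha with ha | ⟨z', hz', k, rfl⟩
    · left
      rw [memH] at ha ⊢
      rw [hNadd]
      have : N f = 0 := hNf
      omega
    · right
      refine ⟨z', hz', k + 1, ?_⟩
      have harg : ((k + 1 : ℕ) : ℤ) = (k : ℤ) + 1 := by push_cast; ring
      rw [harg, hFadd, hF1, add_assoc]
  have hASf : ∀ z ∈ AS, z + f ∈ AS := by
    intro z hz
    obtain ⟨t, ht⟩ := LRAux.mem_bclosure_iff.1 hz
    exact LRAux.iter_subset_bclosure _ _ t (LRAux.iter_shift_invariant hA0f t z ht)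
  have hASF : ∀ z ∈ AS, ∀ m : ℕ, z + F (m : ℤ) ∈ AS := by
    intro z hz m
    induction m with
    | zero => rw [Int.ofNat_zero, hF0, add_zero]; exact hz
    | succ m ih =>
      have harg : ((m + 1 : ℕ) : ℤ) = (m : ℤ) + 1 := by push_cast; ring
      rw [harg, hFadd, hF1, ← add_assoc]
      exact hASf _ ih
  -- row 0 is entirely infected in AS
  have hleft : ∀ m : ℤ, ∃ k : ℤ, k ≤ m ∧ F k ∈ AS := by
    intro m
    by_contra h
    push_neg at h
    apply hinf
    have hsub : (bclosure U (halfPlane u ∪ ↑Z') ∩ lineMinus u) ⊆ F '' (Set.Ioc m 0) := by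
      intro w hw
      obtain ⟨hw1, hw2⟩ := hw
      obtain ⟨hN0, hP0⟩ := (memLm w).1 hw2
      obtain ⟨k, rfl⟩ := hgen' w hN0
      have hk0 : k ≤ 0 := by
        have := hPF k
        nlinarith
      have hkm : m < k := by
        by_contra hk
        push_neg at hk
        exact h k hk (hsubAS hw1)
      exact ⟨k, ⟨hkm, hk0⟩, rfl⟩
    exact ((Set.finite_Ioc m 0).image F).subset hsub
  have hrow0 : ∀ k : ℤ, F k ∈ AS := by
    intro k₁
    obtain ⟨k, hk, hkAS⟩ := hleft k₁
    have harg : (((k₁ - k).toNat : ℕ) : ℤ) = k₁ - k := Int.toNat_of_nonneg (by omega)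
    have heq : F k₁ = F k + F (((k₁ - k).toNat : ℕ) : ℤ) := by
      rw [harg, ← hFadd]
      congr 1
      ring
    rw [heq]
    exact hASF _ hkAS _
  -- main case split
  by_cases hC : ∀ z ∈ AS, N z ≤ h₀
  case neg =>
    push_neg at hC
    obtain ⟨z1, hz1AS, hz1⟩ := hC
    have hex : ∃ t, ∃ w : Site, w ∈ iter U A0 t ∧ h₀ < N w := by
      obtain ⟨t, ht⟩ := LRAux.mem_bclosure_iff.1 hz1AS
      exact ⟨t, z1, ht, hz1⟩
    set T := Nat.find hex with hTdef
    obtain ⟨w, hwT, hwN⟩ := Nat.find_spec hex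
    rw [← hTdef] at hwT
    have hmin : ∀ t < T, ∀ w' ∈ iter U A0 t, N w' ≤ h₀ := by
      intro t ht w' hw'
      by_contra hcon
      push_neg at hcon
      exact Nat.find_min hex ht ⟨w', hw', hcon⟩
    have hT0 : T ≠ 0 := by
      intro h
      rw [h] at hwT
      rcases hwT with hH | ⟨z', hz', k, rfl⟩
      · rw [memH] at hH; omega
      · have h1 : N (z' + F (k : ℤ)) = N z' + N (F (k : ℤ)) := hNadd _ _
        have h2 := hNF (k : ℤ)
        have h3 := hh₀ z' hz'
        omega
    obtain ⟨T', hT'⟩ := Nat.exists_eq_succ_of_ne_zero hT0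
    rw [hT'] at hwT
    rcases hwT with hin | ⟨X, hXU, hXy⟩
    · have := hmin T' (by omega) w hin
      omega
    · have hXneg : ∀ y ∈ X, N y < 0 := by
        intro y hy
        have h1 : N (w + y) ≤ h₀ := hmin T' (by omega) _ (hXy y hy)
        have h2 : N (w + y) = N w + N y := hNadd _ _
        omega
      refine ⟨∅, by simp, ?_⟩
      intro z hz
      have hN0 : N z = 0 := ((memLm z).1 hz).1
      have hmem : z ∈ iter U (halfPlane u ∪ (↑(∅ : Finset Site) : Set Site)) 1 := by
        refine Or.inr ⟨X, hXU, fun y hy => ?_⟩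
        refine Or.inl ((memH _).2 ?_)
        have h2 : N (z + y) = N z + N y := hNadd _ _
        have := hXneg y hy
        omega
      exact LRAux.iter_subset_bclosure _ _ 1 hmem
  case pos =>
    have hfull0 : (0:ℤ) ≤ 0 ∧ 0 ≤ h₀ ∧
        ((∃ z₀ : Site, N z₀ = 0) ∧ ∀ z : Site, N z = 0 → z ∈ AS) := by
      refine ⟨le_refl 0, hh₀0, ⟨0, by simp [hNdef, LRAux.Nv]⟩, ?_⟩
      intro z hz
      obtain ⟨k, rfl⟩ := hgen' z hz
      exact hrow0 k
    obtain ⟨js, ⟨hjs0, hjsh, ⟨z₀, hz₀⟩, hjsfull⟩, hjsmax⟩ :=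
      Int.exists_greatest_of_bdd
        (P := fun j => 0 ≤ j ∧ j ≤ h₀ ∧
          ((∃ z₀ : Site, N z₀ = j) ∧ ∀ z : Site, N z = j → z ∈ AS))
        ⟨h₀, fun j hj => hj.2.1⟩ ⟨0, hfull0⟩
    -- every row strictly above js is bounded to the left in AS
    have hγj : ∀ j : ℤ, js < j → ∃ c : ℤ, ∀ z ∈ AS, N z = j → c ≤ P z := by
      intro j hj
      by_contra hcon
      push_neg at hcon
      have hfullj : ∀ z : Site, N z = j → z ∈ AS := by
        intro z hz
        obtain ⟨z1, hz1AS, hz1N, hz1P⟩ := hcon (P z)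
        have hNd : N (z - z1) = N z - N z1 := LRAux.Nv_sub v _ _
        have hPd : P (z - z1) = P z - P z1 := LRAux.Pv_sub v _ _
        obtain ⟨k, hk⟩ := hgen' (z - z1) (by omega)
        have hPk : P (z - z1) = k * P f := by rw [hk]; exact hPF k
        have hk1 : 1 ≤ k := by
          by_contra hcon2
          push_neg at hcon2
          have : k * P f ≤ 0 :=
            mul_nonpos_iff.2 (Or.inr ⟨by omega, by omega⟩)
          omega
        have hzeq : z = z1 + F ((k.toNat : ℕ) : ℤ) := by
          have h1 : ((k.toNat : ℕ) : ℤ) = k := Int.toNat_of_nonneg (by omega)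
          rw [h1, ← hk]
          abel
        rw [hzeq]
        exact hASF z1 hz1AS k.toNat
      obtain ⟨z1, hz1AS, hz1N, -⟩ := hcon 0
      have hjh : j ≤ h₀ := by
        have := hC z1 hz1AS
        omega
      have := hjsmax j ⟨by omega, hjh, ⟨z1, hz1N⟩, hfullj⟩
      omega
    choose! cfun hcfun using hγj
    set γ : ℤ := -(((Finset.Icc (js+1) h₀).sup fun j => (-(cfun j)).toNat : ℕ) : ℤ) with hγdef
    have hγ : ∀ z ∈ AS, js < N z → γ ≤ P z := by
      intro z hzAS hzN
      have h1 : N z ≤ h₀ := hC z hzAS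
      have h2 : cfun (N z) ≤ P z := hcfun (N z) hzN z hzAS rfl
      have h3 : (-(cfun (N z))).toNat ≤ (Finset.Icc (js+1) h₀).sup fun j => (-(cfun j)).toNat :=
        Finset.le_sup (f := fun j => (-(cfun j)).toNat) (by rw [Finset.mem_Icc]; omega)
      have h4 : (((-(cfun (N z))).toNat : ℕ) : ℤ) ≤
          (((Finset.Icc (js+1) h₀).sup fun j => (-(cfun j)).toNat : ℕ) : ℤ) := by
        exact_mod_cast h3
      omega
    set B : ℤ := min (γ - r - 1) p₀ with hBdef
    have hex : ∃ t, ∃ x : Site, x ∈ iter U A0 t ∧ N x = js ∧ P x < B := by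
      set k : ℤ := min (B - P z₀ - 1) 0 with hkdef
      have hx : z₀ + F k ∈ AS := by
        apply hjsfull
        rw [hNadd, hNF, add_zero, hz₀]
      obtain ⟨t, ht⟩ := LRAux.mem_bclosure_iff.1 hx
      refine ⟨t, z₀ + F k, ht, ?_, ?_⟩
      · rw [hNadd, hNF, add_zero, hz₀]
      · rw [hPadd, hPF]
        have h1 : k ≤ 0 := min_le_right _ _
        have h2 : k ≤ B - P z₀ - 1 := min_le_left _ _
        nlinarith [mul_nonneg (neg_nonneg.2 h1) (by linarith : (0:ℤ) ≤ P f - 1)]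
    set T := Nat.find hex with hTdef
    obtain ⟨x, hxT, hxN, hxP⟩ := Nat.find_spec hex
    rw [← hTdef] at hxT
    have hmin : ∀ t < T, ∀ w ∈ iter U A0 t, N w = js → B ≤ P w := by
      intro t ht w hw hN
      by_contra hcon
      push_neg at hcon
      exact Nat.find_min hex ht ⟨w, hw, hN, hcon⟩
    have hT0 : T ≠ 0 := by
      intro h
      rw [h] at hxT
      rcases hxT with hH | ⟨z', hz', k, rfl⟩
      · rw [memH] at hH; omega
      · have h1 : P (z' + F (k : ℤ)) = P z' + P (F (k : ℤ)) := hPadd _ _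
        have h1' : P (F (k : ℤ)) = (k : ℤ) * P f := hPF _
        have h2 := hp₀ z' hz'
        have h3 : 0 ≤ (k : ℤ) * P f := mul_nonneg (Int.ofNat_nonneg k) (by linarith)
        have h4 : B ≤ p₀ := min_le_right _ _
        omega
    obtain ⟨T', hT'⟩ := Nat.exists_eq_succ_of_ne_zero hT0
    rw [hT'] at hxT
    rcases hxT with hin | ⟨X, hXU, hXy⟩
    · have := hmin T' (by omega) x hin hxN
      omega
    have hclass : ∀ y ∈ X, N y < 0 ∨ ∃ k : ℤ, 1 ≤ k ∧ k ≤ r ∧ y = F k := by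
      intro y hy
      have hw : x + y ∈ iter U A0 T' := hXy y hy
      have hwAS : x + y ∈ AS := LRAux.iter_subset_bclosure _ _ T' hw
      have hNw : N (x + y) = N x + N y := hNadd x y
      have hPw : P (x + y) = P x + P y := hPadd x y
      obtain ⟨hyN, hyP⟩ := hr X hXU y hy
      rcases lt_trichotomy (N (x + y)) js with hlt | heq | hgt
      · left; omega
      · have hBw : B ≤ P (x + y) := hmin T' (by omega) (x + y) hw heq
        have hNy : N y = 0 := by omega
        obtain ⟨k, rfl⟩ := hgen' y hNy
        have hPy : P (F k) = k * P f := hPF k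
        have hPypos : 0 < P (F k) := by omega
        have hk1 : 1 ≤ k := by
          by_contra hcon2
          push_neg at hcon2
          have : k * P f ≤ 0 := mul_nonpos_iff.2 (Or.inr ⟨by omega, by omega⟩)
          omega
        have hkk : k ≤ k * P f := le_mul_of_one_le_right (by omega) hPf1
        exact Or.inr ⟨k, hk1, by omega, rfl⟩
      · exfalso
        have h1 : γ ≤ P (x + y) := hγ (x + y) hwAS (by omega)
        have h2 : B ≤ γ - r - 1 := min_le_left _ _
        omega
    set Zf : Finset Site := (Finset.range (r.toNat + 1)).image (fun n : ℕ => F (n : ℤ))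
      with hZfdef
    have hFZ : ∀ k : ℤ, 0 ≤ k → k ≤ r → F k ∈ (↑Zf : Set Site) := by
      intro k h0k hkr
      simp only [hZfdef, Finset.coe_image, Set.mem_image, Finset.mem_coe, Finset.mem_range]
      exact ⟨k.toNat, by omega, by rw [Int.toNat_of_nonneg h0k]⟩
    have hZp : (↑Zf : Set Site) ⊆ linePlus u := by
      intro z hz
      simp only [hZfdef, Finset.coe_image, Set.mem_image, Finset.mem_coe,
        Finset.mem_range] at hz
      obtain ⟨n, hn, rfl⟩ := hz
      rw [memLp]
      refine ⟨hNF _, ?_⟩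
      rw [hPF]
      exact mul_nonneg (Int.ofNat_nonneg n) (by omega)
    set D : Set Site := bclosure U (halfPlane u ∪ (↑Zf : Set Site)) with hDdef
    have hstep1 : F (-1) ∈ D := by
      have hmem : F (-1) ∈ iter U (halfPlane u ∪ (↑Zf : Set Site)) 1 := by
        refine Or.inr ⟨X, hXU, fun y hy => ?_⟩
        rcases hclass y hy with hN | ⟨k, hk1, hkr, rfl⟩
        · refine Or.inl ((memH _).2 ?_)
          have h2 : N (F (-1) + y) = N (F (-1)) + N y := hNadd _ _
          have h3 := hNF (-1 : ℤ)
          omega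
        · refine Or.inr ?_
          have h1 : F (-1) + F k = F (-1 + k) := (hFadd _ _).symm
          rw [h1]
          exact hFZ (-1 + k) (by omega) (by omega)
      exact LRAux.iter_subset_bclosure _ _ 1 hmem
    have hsweep : ∀ m : ℕ, F (-(m : ℤ)) ∈ D := by
      intro m
      induction m using Nat.strong_induction_on with
      | _ m ih =>
        cases m with
        | zero =>
          refine LRAux.subset_bclosure _ _ (Or.inr ?_)
          simpa using hFZ 0 le_rfl hr0
        | succ m' =>
          have hw := LRAux.bclosure_translate (U := U) (A := halfPlane u ∪ (↑Zf : Set Site))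
            (F (-(m' : ℤ))) (F (-1)) hstep1
          have htr : {b : Site | b - F (-(m' : ℤ)) ∈ halfPlane u ∪ (↑Zf : Set Site)} ⊆ D := by
            intro b hb
            have h2 : N (b - F (-(m' : ℤ))) = N b - N (F (-(m' : ℤ))) := LRAux.Nv_sub v _ _
            have h3 := hNF (-(m' : ℤ))
            rcases hb with hH | hZ
            · refine LRAux.subset_bclosure _ _ (Or.inl ((memH b).2 ?_))
              have h1 : N (b - F (-(m' : ℤ))) < 0 := (memH _).1 hH
              omega
            · simp only [hZfdef, Finset.coe_image, Set.mem_image, Finset.mem_coe,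
                Finset.mem_range] at hZ
              obtain ⟨n, hn, hbn⟩ := hZ
              have hb' : b = F ((n : ℤ) + -(m' : ℤ)) := by
                rw [hFadd]
                exact sub_eq_iff_eq_add.1 hbn.symm
              rcases le_or_gt (m' : ℤ) (n : ℤ) with hmn | hmn
              · refine LRAux.subset_bclosure _ _ (Or.inr ?_)
                rw [hb']
                exact hFZ _ (by omega) (by omega)
              · have harg : (n : ℤ) + -(m' : ℤ) = -(((m' - n : ℕ) : ℕ) : ℤ) := by omega
                rw [hb', harg]
                exact ih (m' - n) (by omega)
          have hfin' : F (-((m' + 1 : ℕ) : ℤ)) = F (-1) + F (-(m' : ℤ)) := by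
            rw [← hFadd]
            exact congrArg F (by push_cast; ring)
          rw [hfin']
          exact LRAux.bclosure_subset_of_subset htr hw
    refine ⟨Zf, hZp, ?_⟩
    intro z hz
    obtain ⟨hN0, hP0⟩ := (memLm z).1 hz
    obtain ⟨k, rfl⟩ := hgen' z hN0
    have hPk := hPF k
    have hk0 : k ≤ 0 := by
      by_contra hcon
      push_neg at hcon
      have : 0 < k * P f := mul_pos (by omega) (by omega)
      omega
    have hke : F k = F (-(((-k).toNat : ℕ) : ℤ)) := congrArg F (by omega)
    rw [hke]
    exact hsweep (-k).toNat



end BP
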